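/- Let R be an integral domain, Q a commutative cancellative monoid (written additively), and α : Q → R an injective monoid homomorphism into the multiplicative monoid of R; assume moreover that R is α-flat. Then for all fractional ideals J, J' of Q, one has (J ∩ J')R = JR ∩ J'R as R-submodules of the fraction field Frac(R). -/

import Mathlib

open CategoryTheory

universe u

/-- The ring homomorphism `ℤ[Q] → R` induced by a monoid homomorphism `α` from `Q` to the
multiplicative monoid of `R`; it makes `R` a `ℤ[Q]`-algebra. -/
noncomputable def logRingHom {R Q : Type*} [CommRing R] [AddCommMonoid Q]
    (α : Multiplicative Q →* R) : AddMonoidAlgebra ℤ Q →+* R :=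
  ((AddMonoidAlgebra.lift ℤ R Q) α).toRingHom

/-- For a subset `I ⊆ Q`, the ideal `ℤ[I]` of the monoid algebra `ℤ[Q]` spanned by the
basis elements `e^a` for `a ∈ I`. -/
noncomputable def monoidIdealSpan {Q : Type*} [AddCommMonoid Q] (I : Set Q) :
    Ideal (AddMonoidAlgebra ℤ Q) :=
  Ideal.span ((fun a : Q => (AddMonoidAlgebra.single a 1 : AddMonoidAlgebra ℤ Q)) '' I)

/-- `R` is `α`-flat: `Tor₁^{ℤ[Q]}(ℤ[Q]/ℤ[I], R) = 0` for every ideal `I` of the monoid `Q`. -/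
noncomputable def IsAlphaFlat {R Q : Type u} [CommRing R] [AddCommMonoid Q]
    (α : Multiplicative Q →* R) : Prop :=
  letI : Module (AddMonoidAlgebra ℤ Q) R := (logRingHom α).toModule
  ∀ I : Set Q, (∀ a : Q, ∀ x ∈ I, a + x ∈ I) →
    Limits.IsZero
      (((Tor (ModuleCat (AddMonoidAlgebra ℤ Q)) 1).obj
          (ModuleCat.of (AddMonoidAlgebra ℤ Q)
            (AddMonoidAlgebra ℤ Q ⧸ monoidIdealSpan I))).obj
        (ModuleCat.of (AddMonoidAlgebra ℤ Q) R))

/-- `I` is a fractional ideal of the cancellative monoid `Q` relative to the embedding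
`ι : Q → G = Q^gp` into its Grothendieck group: `I ⊆ G` is nonempty, stable under
translation by elements of `Q`, and `x + I ⊆ Q` for some `x ∈ Q`. -/
def IsFracIdeal {Q G : Type*} [AddCommMonoid Q] [AddCommGroup G] (ι : Q →+ G)
    (I : Set G) : Prop :=
  I.Nonempty ∧ (∀ q : Q, ∀ a ∈ I, ι q + a ∈ I) ∧ (∃ x : Q, ∀ a ∈ I, ι x + a ∈ Set.range ι)

section Aux

open TensorProduct LinearMap

variable {A : Type u} [CommRing A]

noncomputable def muMap (c : Ideal A) (W : Type u) [AddCommGroup W] [Module A W] :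
    (↥c ⊗[A] W) →ₗ[A] W :=
  (TensorProduct.lid A W).toLinearMap.comp (rTensor W c.subtype)

lemma muMap_natural (c : Ideal A) {W W' : Type u} [AddCommGroup W] [Module A W]
    [AddCommGroup W'] [Module A W'] (f : W →ₗ[A] W') (t : ↥c ⊗[A] W) :
    muMap c W' (lTensor (↥c) f t) = f (muMap c W t) := by
  induction t with
  | zero => simp
  | tmul s w => simp [muMap]
  | add x y hx hy => simp [map_add, hx, hy]

noncomputable def piMap (c : Ideal A) (W : Type u) [AddCommGroup W] [Module A W] :
    W →ₗ[A] ((A ⧸ c) ⊗[A] W) :=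
  (rTensor W c.mkQ).comp (TensorProduct.lid A W).symm.toLinearMap

lemma piMap_apply (c : Ideal A) {W : Type u} [AddCommGroup W] [Module A W] (w : W) :
    piMap c W w = Submodule.Quotient.mk (1 : A) ⊗ₜ w := by
  simp [_root_.piMap]

lemma piMap_surjective (c : Ideal A) (W : Type u) [AddCommGroup W] [Module A W] :
    Function.Surjective (piMap c W) := by
  intro z
  obtain ⟨y, hy⟩ := LinearMap.rTensor_surjective W (N := A) (Submodule.mkQ_surjective c) z
  exact ⟨TensorProduct.lid A W y, by simp [_root_.piMap, hy]⟩

lemma piMap_natural (c : Ideal A) {W W' : Type u} [AddCommGroup W] [Module A W]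
    [AddCommGroup W'] [Module A W'] (f : W →ₗ[A] W') (w : W) :
    lTensor (A ⧸ c) f (piMap c W w) = piMap c W' (f w) := by
  rw [piMap_apply, piMap_apply]
  rfl

lemma piMap_eq_zero_iff (c : Ideal A) {W : Type u} [AddCommGroup W] [Module A W] (w : W) :
    piMap c W w = 0 ↔ w ∈ Set.range (muMap c W) := by
  have h : piMap c W w = rTensor W c.mkQ ((TensorProduct.lid A W).symm w) := rfl
  constructor
  · intro h0
    have h1 : (TensorProduct.lid A W).symm w ∈ ker (rTensor W c.mkQ) := h0
    rw [rTensor_mkQ] at h1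
    obtain ⟨t, ht⟩ := h1
    exact ⟨t, by simp [muMap, ht]⟩
  · rintro ⟨t, rfl⟩
    have h2 : (TensorProduct.lid A W).symm (muMap c W t) = rTensor W c.subtype t := by
      simp [muMap]
    rw [h, h2]
    have h3 : rTensor W c.subtype t ∈ ker (rTensor W c.mkQ) := by
      rw [rTensor_mkQ]; exact ⟨t, rfl⟩
    exact h3

lemma muMap_injective_of_flat (c : Ideal A) (W : Type u) [AddCommGroup W] [Module A W]
    [Module.Flat A W] : Function.Injective (muMap c W) := by
  rw [muMap, LinearMap.coe_comp]
  exact (TensorProduct.lid A W).injective.comp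
    (Module.Flat.rTensor_preserves_injective_linearMap c.subtype c.injective_subtype)

end Aux

section Bridge

open TensorProduct LinearMap Limits MonoidalCategory

lemma bridge {A : Type u} [CommRing A] {W : Type u} [AddCommGroup W] [Module A W]
    (c : Ideal A)
    (hz : IsZero (((Tor (ModuleCat.{u} A) 1).obj (ModuleCat.of A (A ⧸ c))).obj
      (ModuleCat.of A W))) :
    Function.Injective (muMap c W) := by
  set M : ModuleCat.{u} A := ModuleCat.of A (A ⧸ c) with hM
  set Wc : ModuleCat.{u} A := ModuleCat.of A W with hWc
  set F := (tensoringLeft (ModuleCat.{u} A)).obj M with hF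
  let P : ProjectiveResolution Wc := ProjectiveResolution.of Wc
  have h1 : IsZero ((F.leftDerived 1).obj Wc) := hz
  have h2 := h1.of_iso (P.isoLeftDerivedObj F 1).symm
  have h3 : ((F.mapHomologicalComplex _).obj P.complex).ExactAt 1 :=
    (HomologicalComplex.exactAt_iff_isZero_homology _ _).2 h2
  have h4 := (HomologicalComplex.exactAt_iff' _ 2 1 0 (by simp) (by simp)).1 h3
  rw [ShortComplex.moduleCat_exact_iff] at h4
  have h4' : ∀ x : (A ⧸ c) ⊗[A] (P.complex.X 1),
      lTensor (A ⧸ c) (P.complex.d 1 0).hom x = 0 →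
      ∃ y : (A ⧸ c) ⊗[A] (P.complex.X 2),
        lTensor (A ⧸ c) (P.complex.d 2 1).hom y = x := by
    intro x hx
    obtain ⟨y, hy⟩ := h4 x hx
    exact ⟨y, hy⟩
  -- notation for the low-degree part of the resolution
  haveI : Module.Projective A ↑(P.complex.X 0) := by
    rw [IsProjective.iff_projective]
    exact P.projective 0
  haveI : Module.Flat A ↑(P.complex.X 0) := Module.Flat.of_projective
  let iso := HomologicalComplex.singleObjXSelf (ComplexShape.down ℕ) 0 Wc
  let ε : ↑(P.complex.X 0) →ₗ[A] W := (iso.hom.hom : _ →ₗ[A] _) ∘ₗ ((P.π.f 0).hom : _ →ₗ[A] _)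
  have hε_surj : Function.Surjective ε := by
    intro z
    obtain ⟨x, hx⟩ := (ModuleCat.epi_iff_surjective (P.π.f 0)).1 inferInstance (iso.inv z)
    refine ⟨x, ?_⟩
    show iso.hom ((P.π.f 0) x) = z
    rw [hx]
    exact ConcreteCategory.congr_hom iso.inv_hom_id z
  have hεzero : ∀ x : ↑(P.complex.X 0), ε x = 0 → (P.π.f 0) x = 0 := by
    intro x hx
    have h7 : iso.inv (iso.hom ((P.π.f 0) x)) = (P.π.f 0) x :=
      ConcreteCategory.congr_hom iso.hom_inv_id ((P.π.f 0) x)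
    rw [← h7, show iso.hom ((P.π.f 0) x) = 0 from hx, map_zero]
  have he := P.exact₀
  rw [ShortComplex.moduleCat_exact_iff] at he
  have he' : ∀ x : ↑(P.complex.X 0), (P.π.f 0) x = 0 →
      ∃ y : ↑(P.complex.X 1), (P.complex.d 1 0) y = x := fun x hx => he x hx
  have hεd : ε ∘ₗ (P.complex.d 1 0).hom = 0 := by
    ext x
    have hc := P.complex_d_comp_π_f_zero
    have hcx : (P.π.f 0) ((P.complex.d 1 0) x) = 0 := ConcreteCategory.congr_hom hc x
    show iso.hom ((P.π.f 0) ((P.complex.d 1 0) x)) = 0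
    rw [hcx, map_zero]
  have hdd : ∀ x : ↑(P.complex.X 2), (P.complex.d 1 0) ((P.complex.d 2 1) x) = 0 := by
    intro x
    exact ConcreteCategory.congr_hom (P.complex.d_comp_d 2 1 0) x
  -- the main chase
  have key : ∀ t : ↥c ⊗[A] W, muMap c W t = 0 → t = 0 := by
    intro t ht
    obtain ⟨u, hu⟩ := lTensor_surjective (↥c) hε_surj t
    have hεu0 : ε (muMap c _ u) = 0 := by
      rw [← muMap_natural, hu, ht]
    obtain ⟨p1, hp1⟩ := he' (muMap c _ u) (hεzero _ hεu0)
    have hcycle : lTensor (A ⧸ c) (P.complex.d 1 0).hom (piMap c _ p1) = 0 := by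
      rw [piMap_natural, hp1]
      exact (piMap_eq_zero_iff c _).2 ⟨u, rfl⟩
    obtain ⟨y, hy⟩ := h4' _ hcycle
    obtain ⟨p2, hp2⟩ := piMap_surjective c _ y
    have hker : piMap c _ (p1 - (P.complex.d 2 1) p2) = 0 := by
      rw [map_sub, ← piMap_natural, hp2, hy, sub_self]
    obtain ⟨w, hw⟩ := (piMap_eq_zero_iff c _).1 hker
    have hmuu' : muMap c _ (lTensor (↥c) (P.complex.d 1 0).hom w) = muMap c _ u := by
      rw [muMap_natural, hw, map_sub, hp1, hdd, sub_zero]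
    have hu'u : lTensor (↥c) (P.complex.d 1 0).hom w = u :=
      muMap_injective_of_flat c _ hmuu'
    rw [← hu, ← hu'u, ← lTensor_comp_apply]
    rw [show ε ∘ₗ (P.complex.d 1 0).hom = 0 from hεd, lTensor_zero]
    rfl
  intro x y hxy
  have hsub : x - y = 0 := key _ (by rw [map_sub, hxy, sub_self])
  exact sub_eq_zero.1 hsub

end Bridge


section Aux1b

open TensorProduct LinearMap

variable {A : Type u} [CommRing A]

lemma muMap_tmul (c : Ideal A) {W : Type u} [AddCommGroup W] [Module A W] (s : c) (w : W) :
    muMap c W (s ⊗ₜ w) = (s : A) • w := by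
  simp [muMap]

lemma muMap_mono {c c' : Ideal A} (h : c ≤ c') {W : Type u} [AddCommGroup W] [Module A W]
    (t : ↥c ⊗[A] W) :
    muMap c' W (rTensor W (Submodule.inclusion h) t) = muMap c W t := by
  induction t with
  | zero => simp
  | tmul s w => simp [muMap_tmul]
  | add x y hx hy => simp [map_add, hx, hy]

end Aux1b

section Aux2

open TensorProduct LinearMap

variable {A : Type u} [CommRing A] {W : Type u} [AddCommGroup W] [Module A W]

lemma exists_inter_tensor (a b : Ideal A) (t₁ : ↥a ⊗[A] W) (t₂ : ↥b ⊗[A] W)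
    (h : LinearMap.rTensor W (Submodule.inclusion (le_sup_left : a ≤ a ⊔ b)) t₁ =
         LinearMap.rTensor W (Submodule.inclusion (le_sup_right : b ≤ a ⊔ b)) t₂) :
    ∃ w : ↥(a ⊓ b) ⊗[A] W,
      LinearMap.rTensor W (Submodule.inclusion (inf_le_left : a ⊓ b ≤ a)) w = t₁ := by
  classical
  set f : ↥(a ⊓ b) →ₗ[A] ↥a × ↥b :=
    (Submodule.inclusion inf_le_left).prod (-(Submodule.inclusion inf_le_right)) with hf
  set g : ↥a × ↥b →ₗ[A] ↥(a ⊔ b) :=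
    (Submodule.inclusion le_sup_left).comp (LinearMap.fst A ↥a ↥b) +
      (Submodule.inclusion le_sup_right).comp (LinearMap.snd A ↥a ↥b) with hg
  have hexact : Function.Exact f g := by
    intro y
    constructor
    · intro hy
      obtain ⟨u, v⟩ := y
      have h1 : (u : A) + (v : A) = 0 := congrArg Subtype.val hy
      have humem : (u : A) ∈ a ⊓ b := by
        refine ⟨u.2, ?_⟩
        rw [eq_neg_of_add_eq_zero_left h1]
        exact neg_mem v.2
      refine ⟨⟨(u : A), humem⟩, ?_⟩
      have hv : (v : A) = -(u : A) := eq_neg_of_add_eq_zero_right h1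
      apply Prod.ext
      · exact Subtype.ext rfl
      · exact Subtype.ext (by simp [hf, hv, Submodule.coe_inclusion])
    · rintro ⟨x, rfl⟩
      apply Subtype.ext
      simp [hf, hg, Submodule.coe_inclusion]
  have hsurj : Function.Surjective g := by
    rintro ⟨z, hz⟩
    rw [Submodule.mem_sup] at hz
    obtain ⟨u, hu, v, hv, rfl⟩ := hz
    exact ⟨(⟨u, hu⟩, ⟨v, hv⟩), Subtype.ext rfl⟩
  have hT : Function.Exact (rTensor W f) (rTensor W g) := rTensor_exact W hexact hsurj
  set U := rTensor W (LinearMap.inl A ↥a ↥b) t₁ - rTensor W (LinearMap.inr A ↥a ↥b) t₂ with hU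
  have e1 : g.comp (LinearMap.inl A ↥a ↥b) = Submodule.inclusion le_sup_left := by
    ext x
    simp [hg, Submodule.coe_inclusion]
  have e2 : g.comp (LinearMap.inr A ↥a ↥b) = Submodule.inclusion le_sup_right := by
    ext x
    simp [hg, Submodule.coe_inclusion]
  have hgU : rTensor W g U = 0 := by
    rw [hU, map_sub, ← rTensor_comp_apply, ← rTensor_comp_apply, e1, e2, h, sub_self]
  obtain ⟨w, hw⟩ := (hT U).mp hgU
  refine ⟨w, ?_⟩
  have hfst : rTensor W (LinearMap.fst A ↥a ↥b) U = t₁ := by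
    have f1 : (LinearMap.fst A ↥a ↥b).comp (LinearMap.inl A ↥a ↥b) = LinearMap.id := by
      ext x; rfl
    have f2 : (LinearMap.fst A ↥a ↥b).comp (LinearMap.inr A ↥a ↥b) = 0 := by
      ext x; rfl
    rw [hU, map_sub, ← rTensor_comp_apply, ← rTensor_comp_apply, f1, f2, rTensor_id,
      rTensor_zero]
    simp
  have f3 : (LinearMap.fst A ↥a ↥b).comp f = Submodule.inclusion inf_le_left := by
    ext x; rfl
  rw [← hw, ← rTensor_comp_apply, f3] at hfst
  exact hfst

end Aux2


section MonoidAlg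

open TensorProduct LinearMap

/-- The ideal of elements supported in an ideal `I` of the monoid `Q`. -/
def suppIdeal {Q : Type u} [AddCommMonoid Q] (I : Set Q)
    (hI : ∀ a : Q, ∀ x ∈ I, a + x ∈ I) : Ideal (AddMonoidAlgebra ℤ Q) where
  carrier := {g | ∀ a ∈ g.coeff.support, a ∈ I}
  add_mem' := by
    classical
    intro f g hf hg a ha
    rcases Finset.mem_union.1 (Finsupp.support_add ha) with h | h
    · exact hf a h
    · exact hg a h
  zero_mem' := by simp
  smul_mem' := by
    classical
    intro g f hf a ha
    rw [smul_eq_mul] at ha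
    rcases Finset.mem_add.1 (AddMonoidAlgebra.support_coeff_mul_subset g f ha) with ⟨b, hb, c, hc, rfl⟩
    exact hI b c (hf c hc)

lemma mem_monoidIdealSpan_iff {Q : Type u} [AddCommMonoid Q] {I : Set Q}
    (hI : ∀ a : Q, ∀ x ∈ I, a + x ∈ I) (f : AddMonoidAlgebra ℤ Q) :
    f ∈ monoidIdealSpan I ↔ ∀ a ∈ f.coeff.support, a ∈ I := by
  classical
  constructor
  · intro hf a ha
    have hle : monoidIdealSpan I ≤ suppIdeal I hI := by
      apply Ideal.span_le.2
      rintro g ⟨b, hb, rfl⟩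
      intro a' ha'
      have h1 := Finsupp.support_single_subset ha'
      rw [Finset.mem_singleton] at h1
      subst h1
      exact hb
    exact hle hf a ha
  · intro h
    have hf : f = Finsupp.sum f.coeff AddMonoidAlgebra.single := (AddMonoidAlgebra.sum_coeff_single f).symm
    rw [hf]
    apply Submodule.finsuppSum_mem
    intro a ha
    rw [← Finsupp.mem_support_iff] at ha
    have h2 : (AddMonoidAlgebra.single a (f.coeff a) : AddMonoidAlgebra ℤ Q) =
        AddMonoidAlgebra.single (0 : Q) (f.coeff a) * AddMonoidAlgebra.single a 1 := by
      show (AddMonoidAlgebra.single a (f.coeff a) : AddMonoidAlgebra ℤ Q) =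
        AddMonoidAlgebra.single (0 : Q) (f.coeff a) * AddMonoidAlgebra.single a 1
      rw [AddMonoidAlgebra.single_mul_single, zero_add, mul_one]
    rw [h2]
    exact Ideal.mul_mem_left _ _ (Ideal.subset_span ⟨a, h a ha, rfl⟩)

lemma monoidIdealSpan_union {Q : Type u} [AddCommMonoid Q] (I I' : Set Q) :
    monoidIdealSpan (I ∪ I') = monoidIdealSpan I ⊔ monoidIdealSpan I' := by
  unfold monoidIdealSpan
  rw [Set.image_union, Ideal.span_union]

lemma monoidIdealSpan_inter {Q : Type u} [AddCommMonoid Q] {I I' : Set Q}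
    (hI : ∀ a : Q, ∀ x ∈ I, a + x ∈ I) (hI' : ∀ a : Q, ∀ x ∈ I', a + x ∈ I') :
    monoidIdealSpan (I ∩ I') = monoidIdealSpan I ⊓ monoidIdealSpan I' := by
  have hII' : ∀ a : Q, ∀ x ∈ I ∩ I', a + x ∈ I ∩ I' :=
    fun a x hx => ⟨hI a x hx.1, hI' a x hx.2⟩
  ext f
  rw [Submodule.mem_inf, mem_monoidIdealSpan_iff hII', mem_monoidIdealSpan_iff hI,
    mem_monoidIdealSpan_iff hI']
  constructor
  · exact fun h => ⟨fun a ha => (h a ha).1, fun a ha => (h a ha).2⟩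
  · exact fun h a ha => ⟨h.1 a ha, h.2 a ha⟩

set_option maxHeartbeats 1000000 in
set_option synthInstance.maxHeartbeats 200000 in
theorem alphaFlat_span_inter {R Q : Type u} [CommRing R] [AddCommMonoid Q]
    (α : Multiplicative Q →* R) (hflat : IsAlphaFlat α)
    (I I' : Set Q) (hI : ∀ a : Q, ∀ x ∈ I, a + x ∈ I)
    (hI' : ∀ a : Q, ∀ x ∈ I', a + x ∈ I') :
    Submodule.span R ((fun p : Q => α (Multiplicative.ofAdd p)) '' (I ∩ I')) =
      Submodule.span R ((fun p : Q => α (Multiplicative.ofAdd p)) '' I) ⊓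
        Submodule.span R ((fun p : Q => α (Multiplicative.ofAdd p)) '' I') := by
  classical
  letI : Module (AddMonoidAlgebra ℤ Q) R := (logRingHom α).toModule
  apply le_antisymm
  · exact le_inf (Submodule.span_mono (Set.image_mono Set.inter_subset_left))
      (Submodule.span_mono (Set.image_mono Set.inter_subset_right))
  intro x hx
  obtain ⟨hx1, hx2⟩ := Submodule.mem_inf.1 hx
  set fα : Q → R := fun p => α (Multiplicative.ofAdd p) with hfα
  have hsmul : ∀ (f : AddMonoidAlgebra ℤ Q) (r : R), f • r = logRingHom α f * r :=
    fun f r => rfl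
  have hφsingle : ∀ a : Q, logRingHom α (AddMonoidAlgebra.single a 1) = fα a := by
    intro a
    simp [logRingHom, hfα]
  have hmu_mem : ∀ (J : Set Q) (c : Ideal (AddMonoidAlgebra ℤ Q)), c ≤ monoidIdealSpan J →
      ∀ t : ↥c ⊗[AddMonoidAlgebra ℤ Q] R,
        muMap c R t ∈ Submodule.span R (fα '' J) := by
    intro J c hc t
    have hkey : ∀ s ∈ monoidIdealSpan J, ∀ r : R,
        logRingHom α s * r ∈ Submodule.span R (fα '' J) := by
      intro s hs
      induction hs using Submodule.span_induction with
      | mem y hy =>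
        intro r
        obtain ⟨a, ha, rfl⟩ := hy
        rw [hφsingle a, mul_comm]
        exact Submodule.smul_mem _ r (Submodule.subset_span ⟨a, ha, rfl⟩)
      | zero => intro r; simp
      | add y z hy hz hy' hz' =>
        intro r
        rw [map_add, add_mul]
        exact Submodule.add_mem _ (hy' r) (hz' r)
      | smul g y hy hy' =>
        intro r
        rw [smul_eq_mul, map_mul, mul_assoc]
        exact Submodule.smul_mem _ (logRingHom α g) (hy' r)
    induction t with
    | zero => simp
    | tmul s r =>
      rw [muMap_tmul, hsmul]
      exact hkey _ (hc s.2) r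
    | add a b ha hb =>
      rw [map_add]
      exact Submodule.add_mem _ ha hb
  have hmem_mu : ∀ (J : Set Q) (y : R), y ∈ Submodule.span R (fα '' J) →
      ∃ t : ↥(monoidIdealSpan J) ⊗[AddMonoidAlgebra ℤ Q] R,
        muMap (monoidIdealSpan J) R t = y := by
    intro J y hy
    induction hy using Submodule.span_induction with
    | mem z hz =>
      obtain ⟨a, ha, rfl⟩ := hz
      refine ⟨(⟨AddMonoidAlgebra.single a 1, Ideal.subset_span ⟨a, ha, rfl⟩⟩ :
        ↥(monoidIdealSpan J)) ⊗ₜ (1 : R), ?_⟩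
      rw [muMap_tmul, hsmul, hφsingle, mul_one]
    | zero => exact ⟨0, by simp⟩
    | add y z hy hz hy' hz' =>
      obtain ⟨t1, ht1⟩ := hy'
      obtain ⟨t2, ht2⟩ := hz'
      exact ⟨t1 + t2, by rw [map_add, ht1, ht2]⟩
    | smul r y hy hy' =>
      obtain ⟨t, ht⟩ := hy'
      have hmulmap : ∃ m : R →ₗ[AddMonoidAlgebra ℤ Q] R, ∀ z : R, m z = r * z := by
        refine ⟨{ toFun := fun z => r * z, map_add' := fun a b => mul_add r a b,
                  map_smul' := fun f z => ?_ }, fun z => rfl⟩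
        simp only [RingHom.id_apply, hsmul]
        ring
      obtain ⟨m, hm⟩ := hmulmap
      refine ⟨LinearMap.lTensor _ m t, ?_⟩
      rw [muMap_natural, ht, hm, smul_eq_mul]
  obtain ⟨t1, ht1⟩ := hmem_mu I x hx1
  obtain ⟨t2, ht2⟩ := hmem_mu I' x hx2
  have hId : ∀ a : Q, ∀ z ∈ I ∪ I', a + z ∈ I ∪ I' := by
    rintro a z (hz | hz)
    · exact Or.inl (hI a z hz)
    · exact Or.inr (hI' a z hz)
  have hzero := hflat (I ∪ I') hId
  have hinj : Function.Injective
      (muMap (monoidIdealSpan I ⊔ monoidIdealSpan I') R) := by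
    rw [← monoidIdealSpan_union]
    exact bridge _ hzero
  have heq : LinearMap.rTensor R (Submodule.inclusion
        (le_sup_left : monoidIdealSpan I ≤ monoidIdealSpan I ⊔ monoidIdealSpan I')) t1 =
      LinearMap.rTensor R (Submodule.inclusion
        (le_sup_right : monoidIdealSpan I' ≤ monoidIdealSpan I ⊔ monoidIdealSpan I')) t2 := by
    apply hinj
    rw [muMap_mono, muMap_mono, ht1, ht2]
  obtain ⟨w, hw⟩ := exists_inter_tensor _ _ t1 t2 heq
  have hx' : x = muMap (monoidIdealSpan I ⊓ monoidIdealSpan I') R w := by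
    rw [← ht1, ← hw, muMap_mono]
  rw [hx']
  exact hmu_mem (I ∩ I') _ (le_of_eq (monoidIdealSpan_inter hI hI').symm) w

end MonoidAlg


/-- Let `R` be a domain, `Q` a commutative cancellative monoid, and
`α : Q → R` an injective monoid homomorphism into the multiplicative monoid of `R` such that
`R` is `α`-flat.  Let `ι : Q → G` realize `G` as the Grothendieck group `Q^gp` of `Q`, and let
`β : G → Frac(R)ˣ ⊆ Frac(R)` be the induced group homomorphism `α^gp`.  Then for any two
fractional ideals `J, J'` of `Q`, one has `(J ∩ J')R = JR ∩ J'R` as `R`-submodules of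
`Frac(R)`, where `JR` denotes the `R`-submodule of `Frac(R)` generated by `β(J)`. -/
theorem alphaFlat_frac_span_inter {R Q : Type u} {G : Type*} [CommRing R] [IsDomain R]
    [AddCommMonoid Q] [AddCommGroup G]
    (ι : Q →+ G) (hι : Function.Injective ι) (hgp : ∀ g : G, ∃ a b : Q, g = ι a - ι b)
    (α : Multiplicative Q →* R) (hinj : Function.Injective α) (hflat : IsAlphaFlat α)
    (β : G → FractionRing R) (hβ0 : β 0 = 1) (hβadd : ∀ g h : G, β (g + h) = β g * β h)
    (hβι : ∀ q : Q, β (ι q) = algebraMap R (FractionRing R) (α (Multiplicative.ofAdd q)))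
    (J J' : Set G) (hJ : IsFracIdeal ι J) (hJ' : IsFracIdeal ι J') :
    Submodule.span R (β '' (J ∩ J')) =
      Submodule.span R (β '' J) ⊓ Submodule.span R (β '' J') := by
  classical
  -- α never takes the value 0
  have hα_ne : ∀ p : Q, α (Multiplicative.ofAdd p) ≠ 0 := by
    intro p h0
    have h1 : α (Multiplicative.ofAdd p * Multiplicative.ofAdd p) =
        α (Multiplicative.ofAdd p) := by
      rw [map_mul, h0, mul_zero]
    have h3 : p + p = p := congrArg Multiplicative.toAdd (hinj h1)
    have h4 : ι p + ι p = 0 + ι p := by rw [zero_add, ← map_add, h3]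
    have h5 : ι p = (0 : G) := add_right_cancel h4
    have h6 : p = 0 := hι (by rw [h5, map_zero])
    rw [h6] at h0
    have h7 : (1 : R) = 0 := by
      rw [← h0]
      simp
    exact one_ne_zero h7
  obtain ⟨xJ, hxJ⟩ := hJ.2.2
  obtain ⟨xJ', hxJ'⟩ := hJ'.2.2
  set q : Q := xJ + xJ' with hq
  have hranJ : ∀ a ∈ J, ∃ p : Q, ι p = ι q + a := by
    intro a ha
    obtain ⟨y, hy⟩ := hxJ a ha
    refine ⟨xJ' + y, ?_⟩
    rw [map_add, hy, hq, map_add]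
    abel
  have hranJ' : ∀ a ∈ J', ∃ p : Q, ι p = ι q + a := by
    intro a ha
    obtain ⟨y, hy⟩ := hxJ' a ha
    refine ⟨xJ + y, ?_⟩
    rw [map_add, hy, hq, map_add]
    abel
  set IJ : Set Q := {p : Q | ∃ a ∈ J, ι p = ι q + a} with hIJ
  set IJ' : Set Q := {p : Q | ∃ a ∈ J', ι p = ι q + a} with hIJ'
  have hIJideal : ∀ c : Q, ∀ p ∈ IJ, c + p ∈ IJ := by
    rintro c p ⟨a, ha, hpa⟩
    refine ⟨ι c + a, hJ.2.1 c a ha, ?_⟩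
    rw [map_add, hpa]
    abel
  have hIJ'ideal : ∀ c : Q, ∀ p ∈ IJ', c + p ∈ IJ' := by
    rintro c p ⟨a, ha, hpa⟩
    refine ⟨ι c + a, hJ'.2.1 c a ha, ?_⟩
    rw [map_add, hpa]
    abel
  -- the scaling constant
  have hcK_ne : β (ι q) ≠ 0 := by
    rw [hβι q]
    intro h0
    exact hα_ne q (IsFractionRing.injective R (FractionRing R) (by rw [h0, map_zero]))
  -- multiplication by β (ι q) as an R-linear equivalence of Frac R
  have hmK : ∃ m : FractionRing R ≃ₗ[R] FractionRing R,
      ∀ z : FractionRing R, m z = β (ι q) * z := by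
    refine ⟨LinearEquiv.ofLinear
      { toFun := fun z => β (ι q) * z, map_add' := mul_add _,
        map_smul' := fun r z => by simpa using (mul_smul_comm r (β (ι q)) z).symm }
      { toFun := fun z => (β (ι q))⁻¹ * z, map_add' := mul_add _,
        map_smul' := fun r z => by simpa using (mul_smul_comm r (β (ι q))⁻¹ z).symm }
      ?_ ?_, fun z => rfl⟩
    · apply LinearMap.ext
      intro z
      show β (ι q) * ((β (ι q))⁻¹ * z) = z
      field_simp
    · apply LinearMap.ext
      intro z
      show (β (ι q))⁻¹ * (β (ι q) * z) = z
      field_simp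
  obtain ⟨m, hm⟩ := hmK
  have hmco : ⇑m = fun z => β (ι q) * z := funext hm
  -- key set identities
  have himJ : (fun z => β (ι q) * z) '' (β '' J) =
      (algebraMap R (FractionRing R)) '' ((fun p : Q => α (Multiplicative.ofAdd p)) '' IJ) := by
    apply Set.Subset.antisymm
    · rintro - ⟨-, ⟨a, ha, rfl⟩, rfl⟩
      obtain ⟨p, hp⟩ := hranJ a ha
      refine ⟨α (Multiplicative.ofAdd p), ⟨p, ⟨a, ha, hp⟩, rfl⟩, ?_⟩
      rw [← hβι p, hp, hβadd]
    · rintro - ⟨-, ⟨p, ⟨a, ha, hp⟩, rfl⟩, rfl⟩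
      refine ⟨β a, ⟨a, ha, rfl⟩, ?_⟩
      show β (ι q) * β a = (algebraMap R (FractionRing R)) (α (Multiplicative.ofAdd p))
      rw [← hβadd, ← hp, hβι p]
  have himJ' : (fun z => β (ι q) * z) '' (β '' J') =
      (algebraMap R (FractionRing R)) '' ((fun p : Q => α (Multiplicative.ofAdd p)) '' IJ') := by
    apply Set.Subset.antisymm
    · rintro - ⟨-, ⟨a, ha, rfl⟩, rfl⟩
      obtain ⟨p, hp⟩ := hranJ' a ha
      refine ⟨α (Multiplicative.ofAdd p), ⟨p, ⟨a, ha, hp⟩, rfl⟩, ?_⟩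
      rw [← hβι p, hp, hβadd]
    · rintro - ⟨-, ⟨p, ⟨a, ha, hp⟩, rfl⟩, rfl⟩
      refine ⟨β a, ⟨a, ha, rfl⟩, ?_⟩
      show β (ι q) * β a = (algebraMap R (FractionRing R)) (α (Multiplicative.ofAdd p))
      rw [← hβadd, ← hp, hβι p]
  have himInter : (fun z => β (ι q) * z) '' (β '' (J ∩ J')) =
      (algebraMap R (FractionRing R)) ''
        ((fun p : Q => α (Multiplicative.ofAdd p)) '' (IJ ∩ IJ')) := by
    apply Set.Subset.antisymm
    · rintro - ⟨-, ⟨a, ⟨haJ, haJ'⟩, rfl⟩, rfl⟩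
      obtain ⟨p, hp⟩ := hranJ a haJ
      refine ⟨α (Multiplicative.ofAdd p), ⟨p, ⟨⟨a, haJ, hp⟩, ⟨a, haJ', hp⟩⟩, rfl⟩, ?_⟩
      rw [← hβι p, hp, hβadd]
    · rintro - ⟨-, ⟨p, ⟨⟨a, haJ, hp⟩, ⟨a', haJ', hp'⟩⟩, rfl⟩, rfl⟩
      have haa : a = a' := by
        have := hp.symm.trans hp'
        exact add_left_cancel this
      refine ⟨β a, ⟨a, ⟨haJ, haa ▸ haJ'⟩, rfl⟩, ?_⟩
      show β (ι q) * β a = (algebraMap R (FractionRing R)) (α (Multiplicative.ofAdd p))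
      rw [← hβadd, ← hp, hβι p]
  -- the algebra map as a linear map
  set L : R →ₗ[R] FractionRing R := Algebra.linearMap R (FractionRing R) with hL
  have hLinj : Function.Injective L := IsFractionRing.injective R (FractionRing R)
  have hLco : ⇑L = ⇑(algebraMap R (FractionRing R)) := rfl
  -- conclude by applying the injective map `m`
  apply Submodule.map_injective_of_injective m.injective
  rw [Submodule.map_inf _ m.injective]
  rw [Submodule.map_span, Submodule.map_span, Submodule.map_span, LinearEquiv.coe_coe, hmco,
    himJ, himJ', himInter, ← hLco, ← Submodule.map_span, ← Submodule.map_span,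
    ← Submodule.map_span, alphaFlat_span_inter α hflat IJ IJ' hIJideal hIJ'ideal,
    Submodule.map_inf _ hLinj]
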